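/- Let T be any 2×2 complex matrix and let Tᵗ denote its transpose. Then the numerical range of T on ℓ_p² equals the numerical range of Tᵗ on ℓ_q²: V_p(T) = V_q(Tᵗ). -/

import Mathlib

open Complex Real

/-- The `ℓ_r` norm on `ℂ²`. -/
noncomputable def lpNorm (r : ℝ) (x : Fin 2 → ℂ) : ℝ :=
  (∑ k, ‖x k‖ ^ r) ^ (1 / r)

/-- The numerical range of a `2 × 2` complex matrix acting on `ℓ_r²`. -/
noncomputable def numRange (r : ℝ) (T : Matrix (Fin 2) (Fin 2) ℂ) : Set ℂ :=
  { z | ∃ x : Fin 2 → ℂ, lpNorm r x = 1 ∧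
      z = ∑ k, T.mulVec x k * (starRingEnd ℂ) (x k) * ((‖x k‖ ^ (r - 2) : ℝ) : ℂ) }

lemma numRange_subset (p q : ℝ) (hp : 1 < p) (hq : q = p / (p - 1))
    (T : Matrix (Fin 2) (Fin 2) ℂ) :
    numRange p T ⊆ numRange q T.transpose := by
  have hp1 : (0:ℝ) < p - 1 := by linarith
  have hp0 : (0:ℝ) < p := by linarith
  have hpq : (p - 1) * q = p := by
    rw [hq]; field_simp
  rintro z ⟨x, hx, rfl⟩
  set y : Fin 2 → ℂ := fun k =>
    (starRingEnd ℂ) (x k) * ((‖x k‖ ^ (p - 2) : ℝ) : ℂ) with hy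
  have habs : ∀ k, ‖y k‖ = ‖x k‖ ^ (p - 1) := by
    intro k
    rw [hy]
    simp only [norm_mul, Complex.norm_conj, Complex.norm_real, Real.norm_eq_abs,
      _root_.abs_of_nonneg (Real.rpow_nonneg (norm_nonneg _) _)]
    rcases eq_or_ne (x k) 0 with h | h
    · simp [h, Real.zero_rpow (ne_of_gt hp1)]
    · have hpos : 0 < ‖x k‖ := norm_pos_iff.mpr h
      rw [show p - 1 = 1 + (p - 2) by ring, Real.rpow_add hpos, Real.rpow_one]
  have hB : ∀ k, (starRingEnd ℂ) (y k) * ((‖y k‖ ^ (q - 2) : ℝ) : ℂ) = x k := by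
    intro k
    rcases eq_or_ne (x k) 0 with h | h
    · simp [hy, h]
    · have hpos : 0 < ‖x k‖ := norm_pos_iff.mpr h
      rw [habs k, hy]
      simp only [map_mul, Complex.conj_conj, Complex.conj_ofReal]
      rw [mul_assoc, ← Complex.ofReal_mul, ← Real.rpow_mul (norm_nonneg _),
        ← Real.rpow_add hpos]
      have h0 : p - 2 + (p - 1) * (q - 2) = 0 := by nlinarith [hpq]
      rw [h0, Real.rpow_zero]
      simp
  have hsum : ∑ k, ‖x k‖ ^ p = 1 := by
    have hnn : (0:ℝ) ≤ ∑ k, ‖x k‖ ^ p :=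
      Finset.sum_nonneg fun k _ => Real.rpow_nonneg (norm_nonneg _) _
    have h := congrArg (· ^ p) hx
    simp only [lpNorm] at h
    rwa [← Real.rpow_mul hnn, one_div_mul_cancel (ne_of_gt hp0), Real.rpow_one,
      Real.one_rpow] at h
  have hnorm : lpNorm q y = 1 := by
    have hterm : ∀ k, ‖y k‖ ^ q = ‖x k‖ ^ p := by
      intro k
      rw [habs k, ← Real.rpow_mul (norm_nonneg _), hpq]
    simp only [lpNorm, hterm]
    rw [hsum, Real.one_rpow]
  refine ⟨y, hnorm, ?_⟩
  have hval : ∑ k, T.transpose.mulVec y k * (starRingEnd ℂ) (y k) *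
      ((‖y k‖ ^ (q - 2) : ℝ) : ℂ) =
      ∑ k, T.mulVec x k * (starRingEnd ℂ) (x k) *
      ((‖x k‖ ^ (p - 2) : ℝ) : ℂ) := by
    simp only [mul_assoc, hB]
    simp only [Matrix.mulVec, dotProduct, Matrix.transpose_apply,
      Finset.sum_mul, Finset.mul_sum]
    rw [Finset.sum_comm]
    refine Finset.sum_congr rfl fun j _ => Finset.sum_congr rfl fun k _ => ?_
    rw [hy]
    ring
  exact hval.symm

theorem numRange_transpose_conjugate_exponent (p q : ℝ) (hp : 1 < p) (hq : q = p / (p - 1))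
    (T : Matrix (Fin 2) (Fin 2) ℂ) :
    numRange p T = numRange q T.transpose := by
  have hp1 : (0:ℝ) < p - 1 := by linarith
  have hq1 : 1 < q := by
    rw [hq, one_lt_div hp1]; linarith
  have hq' : q - 1 = 1 / (p - 1) := by
    rw [hq]; field_simp; ring
  have hqp : p = q / (q - 1) := by
    rw [hq', hq]; field_simp
  apply Set.Subset.antisymm (numRange_subset p q hp hq T)
  have h := numRange_subset q p hq1 hqp T.transpose
  rwa [Matrix.transpose_transpose] at h
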